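/- There exist a constant C > 0 and an integer N₀ such that for every integer N ≥ N₀ and all real numbers α, β, γ with 0 ≤ α ≤ 1/2, 0 ≤ β ≤ 1/2, and 0 ≤ γ ≤ 1/2, one has |∂L_N/∂α (α, β, γ)| ≤ C/N² and |∂L_N/∂β (α, β, γ)| ≤ C/N². -/

import Mathlib

noncomputable section

/-- `s = exp(β·e^α / (e^α + 2N − 2))`. -/
def sFun (N : ℕ) (α β : ℝ) : ℝ :=
  Real.exp (β * Real.exp α / (Real.exp α + 2 * (N : ℝ) - 2))

/-- `r = s + 2N − 1`. -/
def rFun (N : ℕ) (α β : ℝ) : ℝ := sFun N α β + 2 * (N : ℝ) - 1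

/-- The loss `L_N(α, β, γ) = γ²·(s² + 2N − 1)/r² − 2γ·s/r + 1`. -/
def Lfun (N : ℕ) (α β γ : ℝ) : ℝ :=
  γ ^ 2 * ((sFun N α β) ^ 2 + (2 * (N : ℝ) - 1)) / (rFun N α β) ^ 2 -
    2 * γ * sFun N α β / rFun N α β + 1

/-- The partial derivative `∂L_N/∂α`. -/
def dLalpha (N : ℕ) (α β γ : ℝ) : ℝ := deriv (fun x => Lfun N x β γ) α

/-- The partial derivative `∂L_N/∂β`. -/
def dLbeta (N : ℕ) (α β γ : ℝ) : ℝ := deriv (fun x => Lfun N α x γ) β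

/-- The partial derivative `∂L_N/∂γ`. -/
def dLgamma (N : ℕ) (α β γ : ℝ) : ℝ := deriv (fun x => Lfun N α β x) γ

lemma hds_alpha (N : ℕ) (hN : 2 ≤ N) (α β : ℝ) :
    HasDerivAt (fun x => sFun N x β)
      (sFun N α β * (β * Real.exp α * (2 * (N : ℝ) - 2) / (Real.exp α + 2 * (N : ℝ) - 2) ^ 2)) α := by
  have hc : (0:ℝ) < 2 * (N : ℝ) - 2 := by
    have : (2:ℝ) ≤ (N:ℝ) := by exact_mod_cast hN
    linarith
  have hden : Real.exp α + 2 * (N : ℝ) - 2 ≠ 0 := by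
    have := Real.exp_pos α; linarith
  have hg : HasDerivAt (fun x => β * Real.exp x) (β * Real.exp α) α :=
    (Real.hasDerivAt_exp α).const_mul β
  have hh : HasDerivAt (fun x => Real.exp x + 2 * (N : ℝ) - 2) (Real.exp α) α :=
    ((Real.hasDerivAt_exp α).add_const (2 * (N : ℝ))).sub_const 2
  have h1 := hg.div hh hden
  have h2 : HasDerivAt (fun x => β * Real.exp x / (Real.exp x + 2 * (N : ℝ) - 2))
      (β * Real.exp α * (2 * (N : ℝ) - 2) / (Real.exp α + 2 * (N : ℝ) - 2) ^ 2) α := by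
    refine h1.congr_deriv ?_
    field_simp
    ring
  simpa [sFun] using h2.exp

lemma hds_beta (N : ℕ) (α β : ℝ) :
    HasDerivAt (fun x => sFun N α x)
      (sFun N α β * (Real.exp α / (Real.exp α + 2 * (N : ℝ) - 2))) β := by
  have h2 : HasDerivAt (fun x : ℝ => x * Real.exp α / (Real.exp α + 2 * (N : ℝ) - 2))
      (Real.exp α / (Real.exp α + 2 * (N : ℝ) - 2)) β := by
    have := (hasDerivAt_id β).mul_const (Real.exp α / (Real.exp α + 2 * (N : ℝ) - 2))
    simpa [mul_div_assoc] using this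
  have h3 := h2.exp
  have : (fun x : ℝ => Real.exp (x * Real.exp α / (Real.exp α + 2 * (N : ℝ) - 2)))
      = fun x => sFun N α x := by
    funext x; simp [sFun]
  rw [this] at h3
  simpa [sFun] using h3

lemma hdL (N : ℕ) (hN : 2 ≤ N) (γ : ℝ) (f : ℝ → ℝ) (s' x : ℝ)
    (hs : HasDerivAt f s' x) (hfpos : 0 < f x) :
    HasDerivAt (fun t => γ ^ 2 * ((f t) ^ 2 + (2 * (N : ℝ) - 1)) / (f t + 2 * (N : ℝ) - 1) ^ 2 -
        2 * γ * f t / (f t + 2 * (N : ℝ) - 1) + 1)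
      (s' * (2 * γ ^ 2 * (2 * (N : ℝ) - 1) * (f x - 1) / (f x + 2 * (N : ℝ) - 1) ^ 3 -
        2 * γ * (2 * (N : ℝ) - 1) / (f x + 2 * (N : ℝ) - 1) ^ 2)) x := by
  have hM : (3:ℝ) ≤ 2 * (N : ℝ) - 1 := by
    have : (2:ℝ) ≤ (N:ℝ) := by exact_mod_cast hN
    linarith
  have hr : (0:ℝ) < f x + 2 * (N : ℝ) - 1 := by linarith
  have hrne : f x + 2 * (N : ℝ) - 1 ≠ 0 := ne_of_gt hr
  have hr2ne : (f x + 2 * (N : ℝ) - 1) ^ 2 ≠ 0 := pow_ne_zero _ hrne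
  have hrd : HasDerivAt (fun t => f t + 2 * (N : ℝ) - 1) s' x :=
    (hs.add_const (2 * (N : ℝ))).sub_const 1
  have hr2 : HasDerivAt (fun t => (f t + 2 * (N : ℝ) - 1) ^ 2)
      (2 * (f x + 2 * (N : ℝ) - 1) ^ 1 * s') x := hrd.pow 2
  have hnum : HasDerivAt (fun t => γ ^ 2 * ((f t) ^ 2 + (2 * (N : ℝ) - 1)))
      (γ ^ 2 * (2 * (f x) ^ 1 * s')) x := ((hs.pow 2).add_const _).const_mul _
  have hdiv1 := hnum.div hr2 hr2ne
  have hnum2 : HasDerivAt (fun t => 2 * γ * f t) (2 * γ * s') x := hs.const_mul _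
  have hdiv2 := hnum2.div hrd hrne
  have h := (hdiv1.sub hdiv2).add_const 1
  refine h.congr_deriv ?_
  field_simp
  ring

lemma Fd_bound (N : ℕ) (hN : 2 ≤ N) (s γ : ℝ) (hs1 : 1 ≤ s) (hs2 : s ≤ 2)
    (hγ0 : 0 ≤ γ) (hγ1 : γ ≤ 1/2) :
    |2 * γ ^ 2 * (2 * (N : ℝ) - 1) * (s - 1) / (s + 2 * (N : ℝ) - 1) ^ 3 -
      2 * γ * (2 * (N : ℝ) - 1) / (s + 2 * (N : ℝ) - 1) ^ 2| ≤ 2 / (N : ℝ) := by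
  have hN2 : (2:ℝ) ≤ (N:ℝ) := by exact_mod_cast hN
  have hNpos : (0:ℝ) < (N:ℝ) := by linarith
  have hM : (0:ℝ) < 2 * (N : ℝ) - 1 := by linarith
  have hr : 2 * (N : ℝ) ≤ s + 2 * (N : ℝ) - 1 := by linarith
  have hrpos : (0:ℝ) < s + 2 * (N : ℝ) - 1 := by linarith
  have hγ2 : γ ^ 2 ≤ 1/4 := by nlinarith
  have ha : (0:ℝ) ≤ 2 * γ ^ 2 * (2 * (N : ℝ) - 1) * (s - 1) / (s + 2 * (N : ℝ) - 1) ^ 3 := by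
    apply div_nonneg _ (by positivity)
    have h1 : (0:ℝ) ≤ 2 * γ ^ 2 * (2 * (N : ℝ) - 1) := by positivity
    exact mul_nonneg h1 (by linarith)
  have hb : (0:ℝ) ≤ 2 * γ * (2 * (N : ℝ) - 1) / (s + 2 * (N : ℝ) - 1) ^ 2 := by positivity
  have h1 : 2 * γ ^ 2 * (2 * (N : ℝ) - 1) * (s - 1) / (s + 2 * (N : ℝ) - 1) ^ 3 ≤ 1 / (N : ℝ) := by
    have hnum : 2 * γ ^ 2 * (2 * (N : ℝ) - 1) * (s - 1) ≤ (N : ℝ) ^ 2 := by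
      have e1 : γ ^ 2 * (s - 1) ≤ 1/4 := by nlinarith [sq_nonneg γ]
      have e2 : 2 * γ ^ 2 * (2 * (N : ℝ) - 1) * (s - 1)
          = 2 * (2 * (N : ℝ) - 1) * (γ ^ 2 * (s - 1)) := by ring
      rw [e2]
      have e3 : 2 * (2 * (N : ℝ) - 1) * (γ ^ 2 * (s - 1)) ≤ 2 * (2 * (N : ℝ) - 1) * (1/4) :=
        mul_le_mul_of_nonneg_left e1 (by positivity)
      nlinarith [sq_nonneg ((N : ℝ) - 1)]
    have hden : (N : ℝ) ^ 3 ≤ (s + 2 * (N : ℝ) - 1) ^ 3 := by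
      apply pow_le_pow_left₀ (le_of_lt hNpos); linarith
    calc 2 * γ ^ 2 * (2 * (N : ℝ) - 1) * (s - 1) / (s + 2 * (N : ℝ) - 1) ^ 3
        ≤ (N : ℝ) ^ 2 / (N : ℝ) ^ 3 := div_le_div₀ (by positivity) hnum (by positivity) hden
      _ = 1 / (N : ℝ) := by field_simp
  have h2 : 2 * γ * (2 * (N : ℝ) - 1) / (s + 2 * (N : ℝ) - 1) ^ 2 ≤ 1 / (N : ℝ) := by
    have hnum : 2 * γ * (2 * (N : ℝ) - 1) ≤ 2 * (N : ℝ) := by nlinarith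
    have hden : (2 * (N : ℝ)) ^ 2 ≤ (s + 2 * (N : ℝ) - 1) ^ 2 := by
      apply pow_le_pow_left₀ (by linarith); linarith
    calc 2 * γ * (2 * (N : ℝ) - 1) / (s + 2 * (N : ℝ) - 1) ^ 2
        ≤ 2 * (N : ℝ) / (2 * (N : ℝ)) ^ 2 := div_le_div₀ (by positivity) hnum (by positivity) hden
      _ = 1 / (2 * (N : ℝ)) := by field_simp
      _ ≤ 1 / (N : ℝ) := by
          apply one_div_le_one_div_of_le hNpos; linarith
  calc |2 * γ ^ 2 * (2 * (N : ℝ) - 1) * (s - 1) / (s + 2 * (N : ℝ) - 1) ^ 3 -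
      2 * γ * (2 * (N : ℝ) - 1) / (s + 2 * (N : ℝ) - 1) ^ 2|
      ≤ |2 * γ ^ 2 * (2 * (N : ℝ) - 1) * (s - 1) / (s + 2 * (N : ℝ) - 1) ^ 3| +
        |2 * γ * (2 * (N : ℝ) - 1) / (s + 2 * (N : ℝ) - 1) ^ 2| := abs_sub _ _
    _ = 2 * γ ^ 2 * (2 * (N : ℝ) - 1) * (s - 1) / (s + 2 * (N : ℝ) - 1) ^ 3 +
        2 * γ * (2 * (N : ℝ) - 1) / (s + 2 * (N : ℝ) - 1) ^ 2 := by
          rw [abs_of_nonneg ha, abs_of_nonneg hb]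
    _ ≤ 1 / (N : ℝ) + 1 / (N : ℝ) := add_le_add h1 h2
    _ = 2 / (N : ℝ) := by ring

lemma s_bounds (N : ℕ) (hN : 2 ≤ N) (α β : ℝ) (hα0 : 0 ≤ α) (hα1 : α ≤ 1/2)
    (hβ0 : 0 ≤ β) (hβ1 : β ≤ 1/2) : 1 ≤ sFun N α β ∧ sFun N α β ≤ 2 := by
  have hN2 : (2:ℝ) ≤ (N:ℝ) := by exact_mod_cast hN
  have hc : (0:ℝ) < 2 * (N : ℝ) - 2 := by linarith
  have hA : (0:ℝ) < Real.exp α := Real.exp_pos α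
  have hden : (0:ℝ) < Real.exp α + 2 * (N : ℝ) - 2 := by linarith
  have hu0 : 0 ≤ β * Real.exp α / (Real.exp α + 2 * (N : ℝ) - 2) :=
    div_nonneg (mul_nonneg hβ0 hA.le) hden.le
  have hu1 : β * Real.exp α / (Real.exp α + 2 * (N : ℝ) - 2) ≤ 1/2 := by
    have h1 : β * Real.exp α / (Real.exp α + 2 * (N : ℝ) - 2) ≤ β * Real.exp α / Real.exp α :=
      div_le_div₀ (mul_nonneg hβ0 hA.le) le_rfl hA (by linarith)
    have h2 : β * Real.exp α / Real.exp α = β := by field_simp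
    linarith [h1, h2 ▸ h1]
  constructor
  · rw [sFun]
    calc (1:ℝ) = Real.exp 0 := by simp
      _ ≤ _ := Real.exp_le_exp.2 hu0
  · rw [sFun]
    have he : Real.exp (1/2) ≤ 2 := by
      have h1 : Real.exp (1/2) * Real.exp (1/2) = Real.exp 1 := by
        rw [← Real.exp_add]; norm_num
      have h2 := Real.exp_one_lt_d9
      nlinarith [Real.exp_pos (1/2)]
    calc Real.exp _ ≤ Real.exp (1/2) := Real.exp_le_exp.2 hu1
      _ ≤ 2 := he

/-- For all sufficiently large `N`, in the regime `0 ≤ α, β, γ ≤ 1/2`,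
`|∂L_N/∂α| ≤ C/N²` and `|∂L_N/∂β| ≤ C/N²`. -/
theorem stmt14 :
    ∃ C : ℝ, 0 < C ∧ ∃ N₀ : ℕ, ∀ N : ℕ, N₀ ≤ N → ∀ α β γ : ℝ,
      0 ≤ α → α ≤ 1 / 2 → 0 ≤ β → β ≤ 1 / 2 → 0 ≤ γ → γ ≤ 1 / 2 →
        |dLalpha N α β γ| ≤ C / (N : ℝ) ^ 2 ∧ |dLbeta N α β γ| ≤ C / (N : ℝ) ^ 2 := by
  refine ⟨8, by norm_num, 2, ?_⟩
  intro N hN α β γ hα0 hα1 hβ0 hβ1 hγ0 hγ1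
  have hN2 : (2:ℝ) ≤ (N:ℝ) := by exact_mod_cast hN
  have hNpos : (0:ℝ) < (N:ℝ) := by linarith
  have hA : (0:ℝ) < Real.exp α := Real.exp_pos α
  have hA2 : Real.exp α ≤ 2 := by
    have he : Real.exp (1/2) ≤ 2 := by
      have h1 : Real.exp (1/2) * Real.exp (1/2) = Real.exp 1 := by
        rw [← Real.exp_add]; norm_num
      have h2 := Real.exp_one_lt_d9
      nlinarith [Real.exp_pos (1/2)]
    calc Real.exp α ≤ Real.exp (1/2) := Real.exp_le_exp.2 hα1
      _ ≤ 2 := he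
  have hc : (N:ℝ) ≤ 2 * (N : ℝ) - 2 := by linarith
  have hcpos : (0:ℝ) < 2 * (N : ℝ) - 2 := by linarith
  obtain ⟨hs1, hs2⟩ := s_bounds N hN α β hα0 hα1 hβ0 hβ1
  set s := sFun N α β with hs_def
  have hspos : (0:ℝ) < s := by linarith
  have hFd := Fd_bound N hN s γ hs1 hs2 hγ0 hγ1
  -- bound common second factor
  have hfrac : Real.exp α + 2 * (N : ℝ) - 2 ≥ (N : ℝ) := by linarith
  -- ∂s/∂α bound
  have hsa : s * (β * Real.exp α * (2 * (N : ℝ) - 2) / (Real.exp α + 2 * (N : ℝ) - 2) ^ 2)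
      ≤ 4 / (N : ℝ) := by
    have hnum : β * Real.exp α * (2 * (N : ℝ) - 2) ≤ 2 * (N : ℝ) := by
      have hbA : β * Real.exp α ≤ 1 := by nlinarith
      nlinarith [mul_le_mul_of_nonneg_right hbA hcpos.le]
    have hden : (N : ℝ) ^ 2 ≤ (Real.exp α + 2 * (N : ℝ) - 2) ^ 2 :=
      pow_le_pow_left₀ hNpos.le hfrac 2
    have h1 : β * Real.exp α * (2 * (N : ℝ) - 2) / (Real.exp α + 2 * (N : ℝ) - 2) ^ 2
        ≤ 2 * (N : ℝ) / (N : ℝ) ^ 2 := div_le_div₀ (by positivity) hnum (by positivity) hden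
    have h2 : 2 * (N : ℝ) / (N : ℝ) ^ 2 = 2 / (N : ℝ) := by field_simp
    calc s * (β * Real.exp α * (2 * (N : ℝ) - 2) / (Real.exp α + 2 * (N : ℝ) - 2) ^ 2)
        ≤ 2 * (2 / (N : ℝ)) := by
          apply mul_le_mul hs2 (by rw [h2] at h1; exact h1) (by positivity) (by norm_num)
      _ = 4 / (N : ℝ) := by ring
  have hsa0 : 0 ≤ s * (β * Real.exp α * (2 * (N : ℝ) - 2) / (Real.exp α + 2 * (N : ℝ) - 2) ^ 2) := by
    apply mul_nonneg hspos.le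
    apply div_nonneg _ (by positivity)
    apply mul_nonneg (mul_nonneg hβ0 hA.le) hcpos.le
  -- ∂s/∂β bound
  have hsb : s * (Real.exp α / (Real.exp α + 2 * (N : ℝ) - 2)) ≤ 4 / (N : ℝ) := by
    have h1 : Real.exp α / (Real.exp α + 2 * (N : ℝ) - 2) ≤ 2 / (N : ℝ) :=
      div_le_div₀ (by norm_num) hA2 hNpos hfrac
    calc s * (Real.exp α / (Real.exp α + 2 * (N : ℝ) - 2)) ≤ 2 * (2 / (N : ℝ)) :=
          mul_le_mul hs2 h1 (div_nonneg hA.le (by linarith)) (by norm_num)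
      _ = 4 / (N : ℝ) := by ring
  have hsb0 : 0 ≤ s * (Real.exp α / (Real.exp α + 2 * (N : ℝ) - 2)) :=
    mul_nonneg hspos.le (div_nonneg hA.le (by linarith))
  -- identify the derivatives
  have hda : dLalpha N α β γ =
      (s * (β * Real.exp α * (2 * (N : ℝ) - 2) / (Real.exp α + 2 * (N : ℝ) - 2) ^ 2)) *
      (2 * γ ^ 2 * (2 * (N : ℝ) - 1) * (s - 1) / (s + 2 * (N : ℝ) - 1) ^ 3 -
        2 * γ * (2 * (N : ℝ) - 1) / (s + 2 * (N : ℝ) - 1) ^ 2) :=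
    (hdL N hN γ (fun x => sFun N x β) _ α (hds_alpha N hN α β) hspos).deriv
  have hdb : dLbeta N α β γ =
      (s * (Real.exp α / (Real.exp α + 2 * (N : ℝ) - 2))) *
      (2 * γ ^ 2 * (2 * (N : ℝ) - 1) * (s - 1) / (s + 2 * (N : ℝ) - 1) ^ 3 -
        2 * γ * (2 * (N : ℝ) - 1) / (s + 2 * (N : ℝ) - 1) ^ 2) :=
    (hdL N hN γ (fun x => sFun N α x) _ β (hds_beta N α β) hspos).deriv
  have hfin : (4 / (N : ℝ)) * (2 / (N : ℝ)) = 8 / (N : ℝ) ^ 2 := by field_simp; ring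
  constructor
  · rw [hda, abs_mul, abs_of_nonneg hsa0, ← hfin]
    exact mul_le_mul hsa hFd (abs_nonneg _) (by positivity)
  · rw [hdb, abs_mul, abs_of_nonneg hsb0, ← hfin]
    exact mul_le_mul hsb hFd (abs_nonneg _) (by positivity)
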